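/- Let E be a real vector space, p : ℕ → E, and m : ℕ → E satisfying, for every integer t ≥ 5, m t = ((t−3)/(t+1)) • m(t−1) + (4/(t+1)) • p t. Then for every integer t ≥ 5 the recursion has the closed-form solution m t = (120 / ((t−2)(t−1)t(t+1))) • m 4 + ∑_{k=5}^{t} (4(k−2)(k−1)k / ((t−2)(t−1)t(t+1))) • p k. Moreover the coefficients are nonnegative and sum to 1, so m t is a convex combination of m 4 and the predictions p 5, …, p t in which more recent predictions receive larger weight. -/

import Mathlib

private lemma D_pos (t : ℕ) (ht : 5 ≤ t) :
    0 < ((t : ℝ) - 2) * ((t : ℝ) - 1) * (t : ℝ) * ((t : ℝ) + 1) := by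
  have h : (5 : ℝ) ≤ t := by exact_mod_cast ht
  have h1 : (0:ℝ) < (t:ℝ) - 2 := by linarith
  have h2 : (0:ℝ) < (t:ℝ) - 1 := by linarith
  have h3 : (0:ℝ) < (t:ℝ) := by linarith
  have h4 : (0:ℝ) < (t:ℝ) + 1 := by linarith
  exact mul_pos (mul_pos (mul_pos h1 h2) h3) h4

private lemma sum_weights (t : ℕ) (ht : 5 ≤ t) :
    ∑ k ∈ Finset.Icc 5 t, (4 * ((k : ℝ) - 2) * ((k : ℝ) - 1) * (k : ℝ))
      = ((t : ℝ) - 2) * ((t : ℝ) - 1) * (t : ℝ) * ((t : ℝ) + 1) - 120 := by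
  induction t, ht using Nat.le_induction with
  | base => norm_num
  | succ t ht ih =>
      rw [Finset.sum_Icc_succ_top (by omega : 5 ≤ t + 1), ih]
      push_cast
      ring

private lemma closed_form {E : Type*} [AddCommGroup E] [Module ℝ E] (p m : ℕ → E)
    (hm : ∀ t : ℕ, 5 ≤ t →
      m t = (((t : ℝ) - 3) / ((t : ℝ) + 1)) • m (t - 1)
        + ((4 : ℝ) / ((t : ℝ) + 1)) • p t) :
    ∀ t : ℕ, 5 ≤ t →
      m t = ((120 : ℝ)
              / (((t : ℝ) - 2) * ((t : ℝ) - 1) * (t : ℝ) * ((t : ℝ) + 1))) • m 4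
          + ∑ k ∈ Finset.Icc 5 t,
              ((4 * ((k : ℝ) - 2) * ((k : ℝ) - 1) * (k : ℝ))
                / (((t : ℝ) - 2) * ((t : ℝ) - 1) * (t : ℝ) * ((t : ℝ) + 1))) • p k := by
  intro t ht
  induction t, ht using Nat.le_induction with
  | base =>
      have h5 := hm 5 (le_refl 5)
      norm_num at h5 ⊢
      rw [h5]
      try norm_num
  | succ t ht ih =>
      have hrec := hm (t + 1) (by omega)
      have hsub : t + 1 - 1 = t := by omega
      rw [hsub] at hrec
      push_cast at hrec
      have ht5 : (5 : ℝ) ≤ t := by exact_mod_cast ht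
      have h1 : ((t:ℝ) - 2) ≠ 0 := by linarith
      have h2 : ((t:ℝ) - 1) ≠ 0 := by linarith
      have h3 : (t:ℝ) ≠ 0 := by linarith
      have h4 : ((t:ℝ) + 1) ≠ 0 := by linarith
      have h5 : ((t:ℝ) + 2) ≠ 0 := by linarith
      have hDpos := D_pos t ht
      have hD : (((t:ℝ) - 2) * ((t:ℝ) - 1) * (t:ℝ) * ((t:ℝ) + 1)) ≠ 0 := hDpos.ne'
      have hD' : (0:ℝ) < ((t:ℝ) + 1 - 2) * ((t:ℝ) + 1 - 1) * ((t:ℝ) + 1) * ((t:ℝ) + 1 + 1) := by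
        have h := D_pos (t + 1) (by omega)
        push_cast at h
        exact h
      rw [hrec, ih, smul_add, Finset.smul_sum,
        Finset.sum_Icc_succ_top (by omega : 5 ≤ t + 1)]
      push_cast
      have hsum : ∑ k ∈ Finset.Icc 5 t,
          (((t:ℝ) + 1 - 3) / ((t:ℝ) + 1 + 1)) •
            ((4 * ((k:ℝ) - 2) * ((k:ℝ) - 1) * (k:ℝ)
              / (((t:ℝ) - 2) * ((t:ℝ) - 1) * (t:ℝ) * ((t:ℝ) + 1))) • p k)
          = ∑ k ∈ Finset.Icc 5 t,
            ((4 * ((k:ℝ) - 2) * ((k:ℝ) - 1) * (k:ℝ))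
              / (((t:ℝ) + 1 - 2) * ((t:ℝ) + 1 - 1) * ((t:ℝ) + 1) * ((t:ℝ) + 1 + 1))) • p k := by
        refine Finset.sum_congr rfl fun k hk => ?_
        rw [smul_smul]
        congr 1
        rw [div_mul_div_comm, div_eq_div_iff (mul_ne_zero (by linarith) hD) hD'.ne']
        ring
      rw [hsum, smul_smul]
      have hc1 : ((t:ℝ) + 1 - 3) / ((t:ℝ) + 1 + 1)
            * (120 / (((t:ℝ) - 2) * ((t:ℝ) - 1) * (t:ℝ) * ((t:ℝ) + 1)))
          = 120 / (((t:ℝ) + 1 - 2) * ((t:ℝ) + 1 - 1) * ((t:ℝ) + 1) * ((t:ℝ) + 1 + 1)) := by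
        rw [div_mul_div_comm, div_eq_div_iff (mul_ne_zero (by linarith) hD) hD'.ne']
        ring
      have hc2 : (4:ℝ) / ((t:ℝ) + 1 + 1)
          = 4 * ((t:ℝ) + 1 - 2) * ((t:ℝ) + 1 - 1) * ((t:ℝ) + 1)
              / (((t:ℝ) + 1 - 2) * ((t:ℝ) + 1 - 1) * ((t:ℝ) + 1) * ((t:ℝ) + 1 + 1)) := by
        rw [div_eq_div_iff (by linarith) hD'.ne']
        ring
      rw [hc1, hc2]
      abel

theorem immediate_memory_closed_form
    {E : Type*} [AddCommGroup E] [Module ℝ E] (p m : ℕ → E)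
    (hm : ∀ t : ℕ, 5 ≤ t →
      m t = (((t : ℝ) - 3) / ((t : ℝ) + 1)) • m (t - 1)
        + ((4 : ℝ) / ((t : ℝ) + 1)) • p t) :
    ∀ t : ℕ, 5 ≤ t →
      m t = ((120 : ℝ)
              / (((t : ℝ) - 2) * ((t : ℝ) - 1) * (t : ℝ) * ((t : ℝ) + 1))) • m 4
          + ∑ k ∈ Finset.Icc 5 t,
              ((4 * ((k : ℝ) - 2) * ((k : ℝ) - 1) * (k : ℝ))
                / (((t : ℝ) - 2) * ((t : ℝ) - 1) * (t : ℝ) * ((t : ℝ) + 1))) • p k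
      ∧ 0 ≤ (120 : ℝ) / (((t : ℝ) - 2) * ((t : ℝ) - 1) * (t : ℝ) * ((t : ℝ) + 1))
      ∧ (∀ k ∈ Finset.Icc 5 t,
          0 ≤ (4 * ((k : ℝ) - 2) * ((k : ℝ) - 1) * (k : ℝ))
                / (((t : ℝ) - 2) * ((t : ℝ) - 1) * (t : ℝ) * ((t : ℝ) + 1)))
      ∧ (120 : ℝ) / (((t : ℝ) - 2) * ((t : ℝ) - 1) * (t : ℝ) * ((t : ℝ) + 1))
          + ∑ k ∈ Finset.Icc 5 t,
              (4 * ((k : ℝ) - 2) * ((k : ℝ) - 1) * (k : ℝ))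
                / (((t : ℝ) - 2) * ((t : ℝ) - 1) * (t : ℝ) * ((t : ℝ) + 1)) = 1
      ∧ (∀ k ∈ Finset.Icc 5 t, ∀ k' ∈ Finset.Icc 5 t, k ≤ k' →
          (4 * ((k : ℝ) - 2) * ((k : ℝ) - 1) * (k : ℝ))
              / (((t : ℝ) - 2) * ((t : ℝ) - 1) * (t : ℝ) * ((t : ℝ) + 1))
            ≤ (4 * ((k' : ℝ) - 2) * ((k' : ℝ) - 1) * (k' : ℝ))
              / (((t : ℝ) - 2) * ((t : ℝ) - 1) * (t : ℝ) * ((t : ℝ) + 1))) := by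
  intro t ht
  have hD := D_pos t ht
  have numnn : ∀ k : ℕ, 5 ≤ k → (0:ℝ) ≤ 4 * ((k:ℝ) - 2) * ((k:ℝ) - 1) * (k:ℝ) := by
    intro k hk
    have hk5 : (5 : ℝ) ≤ k := by exact_mod_cast hk
    have : (0:ℝ) ≤ 4 * ((k:ℝ) - 2) := by linarith
    have := mul_nonneg this (by linarith : (0:ℝ) ≤ (k:ℝ) - 1)
    exact mul_nonneg this (by linarith : (0:ℝ) ≤ (k:ℝ))
  refine ⟨closed_form p m hm t ht, by positivity, ?_, ?_, ?_⟩
  · intro k hk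
    simp only [Finset.mem_Icc] at hk
    exact div_nonneg (numnn k hk.1) hD.le
  · rw [← Finset.sum_div, sum_weights t ht]
    rw [← add_div, add_sub_cancel, div_self hD.ne']
  · intro k hk k' hk' hkk
    simp only [Finset.mem_Icc] at hk hk'
    have hk5 : (5 : ℝ) ≤ k := by exact_mod_cast hk.1
    have hkk' : (k : ℝ) ≤ k' := by exact_mod_cast hkk
    refine (div_le_div_iff_of_pos_right hD).mpr ?_
    nlinarith [mul_le_mul (mul_le_mul (by linarith : (k:ℝ) - 2 ≤ (k':ℝ) - 2)
      (by linarith : (k:ℝ) - 1 ≤ (k':ℝ) - 1) (by linarith) (by linarith))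
      hkk' (by linarith) (by nlinarith)]
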